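/- arXiv:1712.02412 — 2 statements merged into one kernel-verified Lean document; each statement's English description precedes it below -/
import Mathlib

section
/- Suppose β̃ ∈ ℝᵖ is a minimizer over β of the square-root lasso objective (1/√n)·‖y − Xβ‖₂ + λ·‖β‖₁ with ‖y − Xβ̃‖₂ > 0 and λ = 3·n^{−1/2}·‖Xᵀε‖_∞ / ‖y − Xβ̃‖₂, where y = Xβ* + ε. Then (1/n)·‖X(β* − β̃)‖₂² ≤ (4/n)·‖Xᵀε‖_∞·‖β*‖₁ − (2/n)·‖Xᵀε‖_∞·‖β̃‖₁, and consequently |(1/n)·‖y − Xβ̃‖₂² − (1/n)·‖ε‖₂²| ≤ (6/n)·‖Xᵀε‖_∞·‖β*‖₁. -/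
open MeasureTheory ProbabilityTheory Matrix
open scoped ENNReal

noncomputable section

/-- squared Euclidean norm on ℝⁿ -/
def l2sq {n : ℕ} (v : Fin n → ℝ) : ℝ := ∑ i, (v i) ^ 2

/-- ℓ₁ norm on ℝᵖ -/
def l1 {p : ℕ} (b : Fin p → ℝ) : ℝ := ∑ j, |b j|

/-- sup norm on ℝᵖ -/
def linf {p : ℕ} (v : Fin p → ℝ) : ℝ := ⨆ j, |v j|

lemma l2sq_nonneg {n : ℕ} (v : Fin n → ℝ) : 0 ≤ l2sq v :=
  Finset.sum_nonneg fun _ _ => sq_nonneg _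

lemma abs_le_linf {p : ℕ} (v : Fin p → ℝ) (j : Fin p) : |v j| ≤ linf v := by
  show |v j| ≤ ⨆ j, |v j|
  exact le_ciSup (Set.Finite.bddAbove (Set.finite_range fun j => |v j|)) j

lemma linf_nonneg {p : ℕ} (v : Fin p → ℝ) : 0 ≤ linf v := by
  rcases isEmpty_or_nonempty (Fin p) with h | h
  · simp [linf, Real.iSup_of_isEmpty]
  · exact le_trans (abs_nonneg _) (abs_le_linf v (Classical.arbitrary _))

lemma abs_dot_le {p : ℕ} (u w : Fin p → ℝ) : |u ⬝ᵥ w| ≤ linf u * l1 w := by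
  calc |u ⬝ᵥ w| ≤ ∑ j, |u j * w j| := Finset.abs_sum_le_sum_abs _ _
    _ ≤ ∑ j, linf u * |w j| := Finset.sum_le_sum fun j _ => by
        rw [abs_mul]
        exact mul_le_mul_of_nonneg_right (abs_le_linf u j) (abs_nonneg _)
    _ = linf u * l1 w := by rw [l1, Finset.mul_sum]

lemma l1_sub_le {p : ℕ} (x z : Fin p → ℝ) : l1 (x - z) ≤ l1 x + l1 z := by
  rw [l1, l1, l1, ← Finset.sum_add_distrib]
  exact Finset.sum_le_sum fun j _ => abs_sub (x j) (z j)

lemma l2sq_sub_smul {n : ℕ} (u w : Fin n → ℝ) (t : ℝ) :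
    l2sq (u - t • w) = l2sq u - 2 * t * (u ⬝ᵥ w) + t ^ 2 * l2sq w := by
  simp only [l2sq, dotProduct, Pi.sub_apply, Pi.smul_apply, smul_eq_mul,
    Finset.mul_sum, ← Finset.sum_sub_distrib, ← Finset.sum_add_distrib]
  exact Finset.sum_congr rfl fun i _ => by ring

lemma l2sq_add' {n : ℕ} (u w : Fin n → ℝ) :
    l2sq (u + w) = l2sq u + 2 * (u ⬝ᵥ w) + l2sq w := by
  simp only [l2sq, dotProduct, Pi.add_apply, Finset.mul_sum,
    ← Finset.sum_add_distrib]
  exact Finset.sum_congr rfl fun i _ => by ring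

lemma sqrt_aux (s b : ℝ) (hs : 0 < s) (hb : 0 ≤ s ^ 2 + b) :
    Real.sqrt (s ^ 2 + b) ≤ s + b / (2 * s) := by
  have hq : 2 * s * (b / (2 * s)) = b := by field_simp
  have h2 : 0 ≤ s + b / (2 * s) := by nlinarith [sq_nonneg s]
  rw [← Real.sqrt_sq h2]
  apply Real.sqrt_le_sqrt
  nlinarith [sq_nonneg (b / (2 * s))]

/-- deterministic bound for the square-root lasso with
λ = 3 n^{-1/2} ‖Xᵀε‖_∞ / ‖y − Xβ̃‖₂. -/
theorem sqrt_lasso_deterministic_bound {n p : ℕ} (hn : 0 < n)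
    (X : Matrix (Fin n) (Fin p) ℝ) (βstar : Fin p → ℝ) (ε : Fin n → ℝ)
    (y : Fin n → ℝ) (hy : y = X.mulVec βstar + ε)
    (βt : Fin p → ℝ) (lam : ℝ)
    (hpos : 0 < Real.sqrt (l2sq (y - X.mulVec βt)))
    (hlam : lam = 3 * linf (Xᵀ.mulVec ε)
        / (Real.sqrt n * Real.sqrt (l2sq (y - X.mulVec βt))))
    (hmin : ∀ β : Fin p → ℝ,
      (1 / Real.sqrt n) * Real.sqrt (l2sq (y - X.mulVec βt)) + lam * l1 βt
        ≤ (1 / Real.sqrt n) * Real.sqrt (l2sq (y - X.mulVec β)) + lam * l1 β) :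
    (1/n) * l2sq (X.mulVec βstar - X.mulVec βt)
        ≤ (4/n) * linf (Xᵀ.mulVec ε) * l1 βstar - (2/n) * linf (Xᵀ.mulVec ε) * l1 βt ∧
    |(1/n) * l2sq (y - X.mulVec βt) - (1/n) * l2sq ε|
        ≤ (6/n) * linf (Xᵀ.mulVec ε) * l1 βstar := by
  set s : ℝ := Real.sqrt (l2sq (y - X.mulVec βt)) with hs_def
  set L : ℝ := linf (Xᵀ.mulVec ε) with hL_def
  set a : ℝ := l1 βstar with ha_def
  set b : ℝ := l1 βt with hb_def
  set w : Fin n → ℝ := X.mulVec βstar - X.mulVec βt with hw_def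
  set Q : ℝ := l2sq w with hQ_def
  set E : ℝ := ε ⬝ᵥ w with hE_def
  set D : ℝ := (y - X.mulVec βt) ⬝ᵥ w with hD_def
  have hL0 : 0 ≤ L := linf_nonneg _
  have hQ0 : 0 ≤ Q := l2sq_nonneg _
  have hsn : (0:ℝ) < Real.sqrt n := Real.sqrt_pos.2 (by exact_mod_cast hn)
  have hn0 : (0:ℝ) < n := by exact_mod_cast hn
  have hwmv : w = X.mulVec (βstar - βt) := by rw [hw_def, Matrix.mulVec_sub]
  have hEbd : |E| ≤ L * (a + b) := by
    have h1 : E = (Xᵀ.mulVec ε) ⬝ᵥ (βstar - βt) := by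
      rw [hE_def, hwmv, Matrix.dotProduct_mulVec, Matrix.mulVec_transpose]
    have h2 : |E| ≤ L * l1 (βstar - βt) := h1 ▸ abs_dot_le _ _
    exact h2.trans (mul_le_mul_of_nonneg_left (l1_sub_le _ _) hL0)
  have hE1 := (abs_le.mp hEbd).1
  have hE2 := (abs_le.mp hEbd).2
  have hr : y - X.mulVec βt = w + ε := by rw [hy, hw_def]; abel
  have hww : w ⬝ᵥ w = Q := by
    rw [hQ_def, l2sq, dotProduct]
    exact Finset.sum_congr rfl fun i _ => by ring
  have hDQE : D = Q + E := by
    rw [hD_def, hr, add_dotProduct, hww, ← hE_def]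
  have hs2 : s ^ 2 = l2sq (y - X.mulVec βt) := Real.sq_sqrt (l2sq_nonneg _)
  have hsne : s ≠ 0 := hpos.ne'
  have hsnne : Real.sqrt n ≠ 0 := hsn.ne'
  have hlam3 : lam * (Real.sqrt n * s) = 3 * L := by
    rw [hlam]; field_simp
  have hlam0 : 0 ≤ lam := by
    rw [hlam]
    apply div_nonneg (by linarith) (by positivity)
  have key : ∀ t : ℝ, 0 < t → t ≤ 1 → D ≤ t * Q / 2 + 3 * L * (a - b) := by
    intro t ht0 ht1
    have hmin' := hmin (βt + t • (βstar - βt))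
    have hyβ : y - X.mulVec (βt + t • (βstar - βt))
        = (y - X.mulVec βt) - t • w := by
      rw [Matrix.mulVec_add, Matrix.mulVec_smul, ← hwmv]
      abel
    have hexp : l2sq (y - X.mulVec (βt + t • (βstar - βt)))
        = s ^ 2 + (-(2 * t * D) + t ^ 2 * Q) := by
      rw [hyβ, l2sq_sub_smul, hs2, hD_def, hQ_def]; ring
    have hnn : 0 ≤ s ^ 2 + (-(2 * t * D) + t ^ 2 * Q) := by
      rw [← hexp]; exact l2sq_nonneg _
    have hsq : Real.sqrt (l2sq (y - X.mulVec (βt + t • (βstar - βt))))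
        ≤ s + (-(2 * t * D) + t ^ 2 * Q) / (2 * s) := by
      rw [hexp]; exact sqrt_aux s _ hpos hnn
    have hl1 : l1 (βt + t • (βstar - βt)) ≤ (1 - t) * b + t * a := by
      rw [l1, ha_def, hb_def, l1, l1, Finset.mul_sum, Finset.mul_sum,
        ← Finset.sum_add_distrib]
      refine Finset.sum_le_sum fun j _ => ?_
      simp only [Pi.add_apply, Pi.smul_apply, Pi.sub_apply, smul_eq_mul]
      have heq : βt j + t * (βstar j - βt j) = (1 - t) * βt j + t * βstar j := by
        ring
      rw [heq]
      calc |(1 - t) * βt j + t * βstar j| ≤ |(1 - t) * βt j| + |t * βstar j| :=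
            abs_add_le _ _
        _ = (1 - t) * |βt j| + t * |βstar j| := by
            rw [abs_mul, abs_mul, abs_of_nonneg (by linarith : (0:ℝ) ≤ 1 - t),
              abs_of_nonneg ht0.le]
    have hchain : (1 / Real.sqrt n) * s + lam * b
        ≤ (1 / Real.sqrt n) * (s + (-(2 * t * D) + t ^ 2 * Q) / (2 * s))
          + lam * ((1 - t) * b + t * a) := by
      refine hmin'.trans ?_
      gcongr
    have e1 : (1 / Real.sqrt n) * (s + (-(2 * t * D) + t ^ 2 * Q) / (2 * s))
        = (1 / Real.sqrt n) * s
          + (1 / Real.sqrt n) * ((-(2 * t * D) + t ^ 2 * Q) / (2 * s)) := by ring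
    have e2 : lam * ((1 - t) * b + t * a) = lam * b + lam * t * (a - b) := by ring
    have h2 : 0 ≤ (1 / Real.sqrt n) * ((-(2 * t * D) + t ^ 2 * Q) / (2 * s))
        + lam * t * (a - b) := by linarith [hchain, e1, e2]
    have h3 : 0 ≤ (-(2 * t * D) + t ^ 2 * Q) / (2 * s)
        + Real.sqrt n * (lam * t * (a - b)) := by
      have h := mul_le_mul_of_nonneg_left h2 hsn.le
      calc (0:ℝ) = Real.sqrt n * 0 := by ring
        _ ≤ Real.sqrt n * ((1 / Real.sqrt n) * ((-(2 * t * D) + t ^ 2 * Q) / (2 * s))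
            + lam * t * (a - b)) := h
        _ = (-(2 * t * D) + t ^ 2 * Q) / (2 * s)
            + Real.sqrt n * (lam * t * (a - b)) := by field_simp
    have h4 : 0 ≤ (-(2 * t * D) + t ^ 2 * Q)
        + 2 * s * (Real.sqrt n * (lam * t * (a - b))) := by
      have h := mul_le_mul_of_nonneg_left h3 (by positivity : (0:ℝ) ≤ 2 * s)
      calc (0:ℝ) = 2 * s * 0 := by ring
        _ ≤ 2 * s * ((-(2 * t * D) + t ^ 2 * Q) / (2 * s)
            + Real.sqrt n * (lam * t * (a - b))) := h
        _ = (-(2 * t * D) + t ^ 2 * Q)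
            + 2 * s * (Real.sqrt n * (lam * t * (a - b))) := by field_simp
    have h5 : 2 * s * (Real.sqrt n * (lam * t * (a - b)))
        = 2 * t * (3 * L * (a - b)) := by
      have e : 2 * s * (Real.sqrt n * (lam * t * (a - b)))
          = 2 * t * (a - b) * (lam * (Real.sqrt n * s)) := by ring
      rw [e, hlam3]; ring
    rw [h5] at h4
    have h6 : t * (2 * D) ≤ t * (t * Q + 2 * (3 * L * (a - b))) := by linarith
    have h7 := (mul_le_mul_iff_right₀ ht0).mp h6
    linarith
  have hDle : D ≤ 3 * L * (a - b) := by
    refine le_of_forall_pos_le_add fun δ hδ => ?_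
    have htQ : (0:ℝ) < Q + 1 := by linarith
    have ht0 : 0 < min 1 (2 * δ / (Q + 1)) := lt_min one_pos (by positivity)
    have ht1 : min 1 (2 * δ / (Q + 1)) ≤ 1 := min_le_left _ _
    have hkey := key _ ht0 ht1
    have h1 : min 1 (2 * δ / (Q + 1)) ≤ 2 * δ / (Q + 1) := min_le_right _ _
    have h2 : min 1 (2 * δ / (Q + 1)) * Q ≤ (2 * δ / (Q + 1)) * Q :=
      mul_le_mul_of_nonneg_right h1 hQ0
    have h3 : (2 * δ / (Q + 1)) * Q ≤ 2 * δ := by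
      have hq1 : Q / (Q + 1) ≤ 1 := by
        rw [div_le_one htQ]; linarith
      calc (2 * δ / (Q + 1)) * Q = 2 * δ * (Q / (Q + 1)) := by ring
        _ ≤ 2 * δ * 1 := mul_le_mul_of_nonneg_left hq1 (by positivity)
        _ = 2 * δ := by ring
    linarith
  have hC1 : Q ≤ 4 * L * a - 2 * L * b := by
    have h1 : Q = D - E := by rw [hDQE]; ring
    linarith
  have hb2a : 2 * L * b ≤ 4 * L * a := by linarith
  have hr2 : l2sq (y - X.mulVec βt) = Q + 2 * E + l2sq ε := by
    rw [hr, l2sq_add', dotProduct_comm w ε, ← hE_def, ← hQ_def]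
  have hC2 : |l2sq (y - X.mulVec βt) - l2sq ε| ≤ 6 * L * a := by
    rw [hr2, abs_le]
    constructor <;> [linarith; linarith]
  constructor
  · have e : (4/(n:ℝ)) * L * a - (2/(n:ℝ)) * L * b
        = (1/(n:ℝ)) * (4 * L * a - 2 * L * b) := by ring
    rw [e]
    exact mul_le_mul_of_nonneg_left hC1 (by positivity)
  · have e : (1:ℝ)/n * l2sq (y - X.mulVec βt) - 1/n * l2sq ε
        = (1/(n:ℝ)) * (l2sq (y - X.mulVec βt) - l2sq ε) := by ring
    rw [e, abs_mul, abs_of_nonneg (by positivity : (0:ℝ) ≤ 1/(n:ℝ))]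
    calc 1/(n:ℝ) * |l2sq (y - X.mulVec βt) - l2sq ε| ≤ 1/(n:ℝ) * (6 * L * a) :=
          mul_le_mul_of_nonneg_left hC2 (by positivity)
      _ = 6/(n:ℝ) * L * a := by ring
end
end

section
/- Fix X ∈ ℝ^{n×p} and y ∈ ℝⁿ. (i) If β̂ ∈ ℝᵖ is a minimizer over β of the lasso objective (1/n)·‖y − Xβ‖₂² + 2λ·‖β‖₁ with λ > 0 and ‖β̂‖₁ > 0, then β̂ is a minimizer over β of the organic lasso objective (1/n)·‖y − Xβ‖₂² + 2ν·‖β‖₁² with ν = λ/(2·‖β̂‖₁). (ii) Conversely, if β̌ ∈ ℝᵖ is a minimizer of the organic lasso objective with parameter ν > 0 and ‖β̌‖₁ > 0, then β̌ is a minimizer of the lasso objective with parameter λ = 2ν·‖β̌‖₁. -/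
open MeasureTheory ProbabilityTheory Matrix
open scoped ENNReal

noncomputable section

lemma l1_nonneg {p : ℕ} (b : Fin p → ℝ) : 0 ≤ l1 b :=
  Finset.sum_nonneg fun _ _ => abs_nonneg _

lemma l1_add_le {p : ℕ} (a b : Fin p → ℝ) : l1 (a + b) ≤ l1 a + l1 b := by
  rw [l1, l1, l1, ← Finset.sum_add_distrib]
  exact Finset.sum_le_sum fun i _ => abs_add_le _ _

lemma l1_smul {p : ℕ} (c : ℝ) (b : Fin p → ℝ) : l1 (c • b) = |c| * l1 b := by
  simp [l1, abs_mul, Finset.mul_sum]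

lemma l2sq_expand {n : ℕ} (r w : Fin n → ℝ) (ε : ℝ) :
    l2sq (r - ε • w) = l2sq r + ε * (-2 * ∑ i, r i * w i) + ε ^ 2 * l2sq w := by
  have h : ∀ i : Fin n, (r i - ε * w i) ^ 2
      = r i ^ 2 + ε * (-2 * (r i * w i)) + ε ^ 2 * w i ^ 2 := fun i => by ring
  simp only [l2sq, Pi.sub_apply, Pi.smul_apply, smul_eq_mul, h,
    Finset.sum_add_distrib, Finset.mul_sum]

lemma eps_limit (C D : ℝ) (hD : 0 ≤ D)
    (h : ∀ ε : ℝ, 0 < ε → ε ≤ 1 → 0 ≤ C + ε * D) : 0 ≤ C := by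
  by_contra hC
  push_neg at hC
  set ε : ℝ := min 1 (-C / (2 * (D + 1))) with hε
  have hεpos : 0 < ε := lt_min one_pos (div_pos (by linarith) (by linarith))
  have hε1 : ε ≤ 1 := min_le_left _ _
  have hε2 : ε ≤ -C / (2 * (D + 1)) := min_le_right _ _
  have key := h ε hεpos hε1
  have hD1 : 0 < 2 * (D + 1) := by linarith
  have : ε * (2 * (D + 1)) ≤ -C := by
    rw [div_eq_mul_inv] at hε2
    calc ε * (2 * (D + 1)) ≤ (-C * (2 * (D + 1))⁻¹) * (2 * (D + 1)) :=
          mul_le_mul_of_nonneg_right hε2 (le_of_lt hD1)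
      _ = -C := by field_simp
  nlinarith


lemma step_lemma (F G Q t s L ν ε : ℝ) (hν : 0 < ν) (hε0 : 0 < ε)
    (hopt : F + 2*ν*t^2 ≤ F + ε*G + ε^2*Q + 2*ν*L^2)
    (hL : 0 ≤ L) (hseg : L ≤ t + ε*(s-t)) :
    0 ≤ (G + 4*ν*t*(s-t)) + ε * (Q + 2*ν*(s-t)^2) := by
  have hsq : L^2 ≤ (t + ε*(s-t))^2 := by nlinarith
  have h2 : 2*ν*L^2 ≤ 2*ν*(t + ε*(s-t))^2 := by nlinarith
  have hstep : 0 ≤ ε * ((G + 4*ν*t*(s-t)) + ε * (Q + 2*ν*(s-t)^2)) := by nlinarith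
  by_contra hneg
  push_neg at hneg
  nlinarith [mul_pos hε0 (neg_pos.mpr hneg)]

lemma fin_lemma (F G Q t s ν : ℝ) (hC : 0 ≤ G + 4*ν*t*(s-t)) (hQ : 0 ≤ Q) :
    F + 2*(2*ν*t) * t ≤ F + G + Q + 2*(2*ν*t) * s := by nlinarith

set_option maxHeartbeats 1000000

/-- mapping between the lasso and organic lasso solution paths. -/
theorem lasso_organic_path_mapping {n p : ℕ} (hn : 0 < n)
    (X : Matrix (Fin n) (Fin p) ℝ) (y : Fin n → ℝ) :
    (∀ lam : ℝ, 0 < lam → ∀ βhat : Fin p → ℝ, 0 < l1 βhat →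
      (∀ β : Fin p → ℝ,
        (1/n) * l2sq (y - X.mulVec βhat) + 2*lam * l1 βhat
          ≤ (1/n) * l2sq (y - X.mulVec β) + 2*lam * l1 β) →
      (∀ β : Fin p → ℝ,
        (1/n) * l2sq (y - X.mulVec βhat) + 2*(lam/(2*l1 βhat)) * (l1 βhat)^2
          ≤ (1/n) * l2sq (y - X.mulVec β) + 2*(lam/(2*l1 βhat)) * (l1 β)^2)) ∧
    (∀ ν : ℝ, 0 < ν → ∀ βc : Fin p → ℝ, 0 < l1 βc →
      (∀ β : Fin p → ℝ,
        (1/n) * l2sq (y - X.mulVec βc) + 2*ν * (l1 βc)^2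
          ≤ (1/n) * l2sq (y - X.mulVec β) + 2*ν * (l1 β)^2) →
      (∀ β : Fin p → ℝ,
        (1/n) * l2sq (y - X.mulVec βc) + 2*(2*ν*l1 βc) * l1 βc
          ≤ (1/n) * l2sq (y - X.mulVec β) + 2*(2*ν*l1 βc) * l1 β)) := by
  have hnR : (0:ℝ) < (n:ℝ) := by exact_mod_cast hn
  constructor
  · -- lasso → organic
    intro lam hlam βhat ht hopt β
    have h := hopt β
    set t := l1 βhat with htdef
    set s := l1 β with hsdef
    have hs : 0 ≤ s := l1_nonneg β
    have e1 : 2*(lam/(2*t)) * t^2 = lam * t := by field_simp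
    have e2 : 2*(lam/(2*t)) * s^2 = lam * s^2 / t := by field_simp
    rw [e1, e2]
    have key : 2*lam*s - lam*t ≤ lam * s^2 / t := by
      rw [le_div_iff₀ ht]
      nlinarith [sq_nonneg (s - t)]
    linarith
  · -- organic → lasso
    intro ν hν βc ht hopt β
    set t := l1 βc with htdef
    set s := l1 β with hsdef
    have hs : 0 ≤ s := l1_nonneg β
    set d : Fin p → ℝ := β - βc with hd
    set r : Fin n → ℝ := y - X.mulVec βc with hr
    set w : Fin n → ℝ := X.mulVec d with hw
    have hresid : ∀ ε : ℝ, y - X.mulVec (βc + ε • d) = r - ε • w := by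
      intro ε
      rw [hr, hw, Matrix.mulVec_add, Matrix.mulVec_smul]
      funext i; simp; ring
    set G : ℝ := (1/(n:ℝ)) * (-2 * ∑ i, r i * w i) with hG
    set Q : ℝ := (1/(n:ℝ)) * l2sq w with hQ
    have hQ0 : 0 ≤ Q := by
      apply mul_nonneg (by positivity) (l2sq_nonneg w)
    -- ℓ₁ bound along the segment
    have hl1seg : ∀ ε : ℝ, 0 ≤ ε → ε ≤ 1 →
        l1 (βc + ε • d) ≤ t + ε * (s - t) := by
      intro ε hε0 hε1
      have hrw : βc + ε • d = (1-ε) • βc + ε • β := by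
        funext j; simp [hd]; ring
      rw [hrw]
      calc l1 ((1-ε) • βc + ε • β) ≤ l1 ((1-ε) • βc) + l1 (ε • β) := l1_add_le _ _
        _ = (1-ε) * t + ε * s := by
            rw [l1_smul, l1_smul, abs_of_nonneg hε0, abs_of_nonneg (by linarith : (0:ℝ) ≤ 1-ε)]
        _ = t + ε * (s - t) := by ring
    -- gradient inequality: 0 ≤ G + 4νt(s-t)
    have hC : 0 ≤ G + 4*ν*t*(s-t) := by
      apply eps_limit _ (Q + 2*ν*(s-t)^2) (by nlinarith [sq_nonneg (s-t)])
      intro ε hε0 hε1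
      have hopt' := hopt (βc + ε • d)
      rw [hresid ε, l2sq_expand] at hopt'
      have hseg := hl1seg ε (le_of_lt hε0) hε1
      have hsε : 0 ≤ l1 (βc + ε • d) := l1_nonneg _
      have expand : (1/(n:ℝ)) * (l2sq r + ε * (-2 * ∑ i, r i * w i) + ε^2 * l2sq w)
          = (1/(n:ℝ)) * l2sq r + ε * G + ε^2 * Q := by rw [hG, hQ]; ring
      rw [expand] at hopt'
      exact step_lemma ((1/(n:ℝ)) * l2sq r) G Q t s (l1 (βc + ε • d)) ν ε hν hε0
        (by linarith [hopt']) hsε hseg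
    -- conclude with ε = 1
    have heq1 : y - X.mulVec β = r - (1:ℝ) • w := by
      have h := hresid 1
      have hb : βc + (1:ℝ) • d = β := by funext j; simp [hd]
      rwa [hb] at h
    rw [heq1, l2sq_expand]
    have expand : (1/(n:ℝ)) * (l2sq r + 1 * (-2 * ∑ i, r i * w i) + 1^2 * l2sq w)
        = (1/(n:ℝ)) * l2sq r + G + Q := by rw [hG, hQ]; ring
    rw [expand]
    exact fin_lemma ((1/(n:ℝ)) * l2sq r) G Q t s ν hC hQ0
end
end
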